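/- Let n, p ≥ 2 and let A₁, …, A_p ∈ GL_n(ℂ) have the same first n−1 columns with respect to a basis e₁,…,e_n, with ⋂_{i=1}^p spec(A_i) = ∅. Then there exists a vector v ∈ ℂⁿ such that {v, A₁v, A₁²v, …, A₁^{n−1}v} is a basis of ℂⁿ and {v, A₁v, …, A₁^{n−2}v} spans W = span(e₁,…,e_{n−1}); consequently, with respect to this new basis each A_i is the companion matrix of its own characteristic polynomial. -/

import Mathlib

open Module Submodule Matrix

private lemma sum_mulVec_aux {ι : Type*} {n : ℕ} (s : Finset ι)
    (M : ι → Matrix (Fin n) (Fin n) ℂ) (x : Fin n → ℂ) :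
    (∑ k ∈ s, M k) *ᵥ x = ∑ k ∈ s, (M k) *ᵥ x := by
  induction s using Finset.cons_induction with
  | empty => simp [Matrix.zero_mulVec]
  | cons a s ha ih => simp [Finset.sum_cons, Matrix.add_mulVec, ih]

/-- The companion matrix of `X^n + c_{n-1} X^{n-1} + ⋯ + c_0`:
ones on the subdiagonal, last column `(-c_0, …, -c_{n-1})ᵀ`, zeros elsewhere. -/
def companionMatrix (n : ℕ) (c : Fin n → ℂ) : Matrix (Fin n) (Fin n) ℂ :=
  fun i j => if (j : ℕ) = n - 1 then -c i else if (i : ℕ) = (j : ℕ) + 1 then 1 else 0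

theorem stmt_14 (n p : ℕ) (hn : 2 ≤ n) (hp : 2 ≤ p)
    (A : Fin p → Matrix (Fin n) (Fin n) ℂ) (hA : ∀ i, IsUnit (A i))
    (e : Basis (Fin n) ℂ (Fin n → ℂ))
    (hcols : ∀ i j : Fin p, ∀ k : Fin n, (k : ℕ) < n - 1 →
      (A i).mulVec (e k) = (A j).mulVec (e k))
    (hspec : ¬ ∃ μ : ℂ, ∀ i, μ ∈ spectrum ℂ (A i))
    (W : Submodule ℂ (Fin n → ℂ))
    (hW : W = Submodule.span ℂ {x | ∃ k : Fin n, (k : ℕ) < n - 1 ∧ x = e k}) :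
    ∃ (v : Fin n → ℂ) (b : Basis (Fin n) ℂ (Fin n → ℂ)),
      (∀ k : Fin n, b k = ((A ⟨0, by omega⟩) ^ (k : ℕ)).mulVec v) ∧
      Submodule.span ℂ
          {x | ∃ k : Fin n, (k : ℕ) < n - 1 ∧ x = ((A ⟨0, by omega⟩) ^ (k : ℕ)).mulVec v} = W ∧
      ∀ i, LinearMap.toMatrix b b (A i).mulVecLin =
        companionMatrix n (fun k => (A i).charpoly.coeff (k : ℕ)) := by
  have i0 : Fin p := ⟨0, by omega⟩
  set A0 : Matrix (Fin n) (Fin n) ℂ := A ⟨0, by omega⟩ with hA0def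
  set g : Module.End ℂ (Fin n → ℂ) := A0.mulVecLin with hgdef
  have hpow : ∀ (k : ℕ) (x : Fin n → ℂ), (A0 ^ k) *ᵥ x = (g ^ k) x := by
    intro k
    induction k with
    | zero => intro x; simp [Matrix.one_mulVec]
    | succ k ih =>
      intro x
      rw [pow_succ' A0, ← Matrix.mulVec_mulVec, ih x, pow_succ' g, Module.End.mul_apply]
      exact (Matrix.mulVecLin_apply _ _).symm
  -- the matrices agree on W
  have hagree : ∀ (i : Fin p), ∀ x ∈ W, (A i) *ᵥ x = A0 *ᵥ x := by
    intro i x hx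
    rw [hW] at hx
    have := LinearMap.eqOn_span (R := ℂ) (s := {x | ∃ k : Fin n, (k : ℕ) < n - 1 ∧ x = e k})
      (f := (A i).mulVecLin) (g := A0.mulVecLin) ?_ hx
    · simpa using this
    · rintro y ⟨k, hk, rfl⟩
      simpa using hcols i ⟨0, by omega⟩ k hk
  -- basic facts about W
  have hWe : ∀ k : Fin n, (k : ℕ) < n - 1 → e k ∈ W := by
    intro k hk
    rw [hW]
    exact Submodule.subset_span ⟨k, hk, rfl⟩
  have hsetW : {x | ∃ k : Fin n, (k : ℕ) < n - 1 ∧ x = e k} =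
      Set.range (fun k : Fin (n-1) => e ⟨(k : ℕ), by omega⟩) := by
    ext x
    constructor
    · rintro ⟨k, hk, rfl⟩
      exact ⟨⟨(k : ℕ), hk⟩, rfl⟩
    · rintro ⟨k, rfl⟩
      exact ⟨⟨(k : ℕ), by omega⟩, by simpa using k.2, rfl⟩
  have hliW : LinearIndependent ℂ (fun k : Fin (n-1) => e ⟨(k : ℕ), by omega⟩) := by
    have := e.linearIndependent.comp (fun k : Fin (n-1) => (⟨(k : ℕ), by omega⟩ : Fin n))
      (fun a b hab => by simpa [Fin.ext_iff] using hab)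
    exact this
  have hfrW : finrank ℂ W = n - 1 := by
    rw [hW, hsetW, finrank_span_eq_card hliW]
    simp
  -- the chain of subspaces
  set V : ℕ → Submodule ℂ (Fin n → ℂ) :=
    fun k => ⨅ j : Fin (k+1), Submodule.comap ((g ^ (j : ℕ) : Module.End ℂ _) :
      (Fin n → ℂ) →ₗ[ℂ] (Fin n → ℂ)) W with hVdef
  have memV : ∀ (k : ℕ) (x : Fin n → ℂ), x ∈ V k ↔ ∀ j : ℕ, j ≤ k → (g ^ j) x ∈ W := by
    intro k x
    rw [hVdef]
    simp only [Submodule.mem_iInf, Submodule.mem_comap]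
    constructor
    · intro h j hj; exact h ⟨j, by omega⟩
    · intro h j; exact h (j : ℕ) (by omega)
  have hV0 : V 0 = W := by
    ext x
    rw [memV]
    constructor
    · intro h; simpa using h 0 le_rfl
    · intro h j hj; interval_cases j; simpa using h
  have hVmono : ∀ k, V (k+1) ≤ V k := by
    intro k x hx
    rw [memV] at hx ⊢
    exact fun j hj => hx j (by omega)
  -- lower bound on dimension
  have hsurj : ∀ m : ℕ, Function.Surjective (g ^ m) := by
    intro m
    obtain ⟨u, hu⟩ := (hA ⟨0, by omega⟩).pow m
    intro y
    refine ⟨(↑u⁻¹ : Matrix (Fin n) (Fin n) ℂ) *ᵥ y, ?_⟩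
    rw [← hpow, Matrix.mulVec_mulVec, ← hu, Units.mul_inv, Matrix.one_mulVec]
  have hfrturn : ∀ m : ℕ, n - 1 ≤ finrank ℂ (Submodule.comap ((g ^ m :
      Module.End ℂ _) : (Fin n → ℂ) →ₗ[ℂ] (Fin n → ℂ)) W) := by
    intro m
    have hmap : Submodule.map ((g ^ m : Module.End ℂ _) :
        (Fin n → ℂ) →ₗ[ℂ] (Fin n → ℂ)) (Submodule.comap ((g ^ m : Module.End ℂ _) :
        (Fin n → ℂ) →ₗ[ℂ] (Fin n → ℂ)) W) = W := by
      rw [Submodule.map_comap_eq_of_surjective (hsurj m)]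
    calc n - 1 = finrank ℂ W := hfrW.symm
      _ = finrank ℂ (Submodule.map ((g ^ m : Module.End ℂ _) :
            (Fin n → ℂ) →ₗ[ℂ] (Fin n → ℂ)) (Submodule.comap ((g ^ m : Module.End ℂ _) :
            (Fin n → ℂ) →ₗ[ℂ] (Fin n → ℂ)) W)) := by rw [hmap]
      _ ≤ _ := Submodule.finrank_map_le _ _
  have hVsucc : ∀ k, V (k+1) = V k ⊓ Submodule.comap ((g ^ (k+1) :
      Module.End ℂ _) : (Fin n → ℂ) →ₗ[ℂ] (Fin n → ℂ)) W := by
    intro k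
    ext x
    rw [Submodule.mem_inf, memV, memV, Submodule.mem_comap]
    constructor
    · intro h
      exact ⟨fun j hj => h j (by omega), h (k+1) le_rfl⟩
    · rintro ⟨h1, h2⟩ j hj
      rcases Nat.lt_or_ge j (k+1) with hj' | hj'
      · exact h1 j (by omega)
      · have : j = k + 1 := by omega
        subst this; exact h2
  have hfrV0 : finrank ℂ (V 0) = n - 1 := by
    rw [show finrank ℂ (V 0) = finrank ℂ W from le_antisymm
      (Submodule.finrank_mono hV0.le) (Submodule.finrank_mono hV0.ge), hfrW]
  have hVlb : ∀ k, n - 1 ≤ finrank ℂ (V k) + k := by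
    intro k
    induction k with
    | zero => omega
    | succ k ih =>
      have h1 := Submodule.finrank_sup_add_finrank_inf_eq (V k)
        (Submodule.comap ((g ^ (k+1) : Module.End ℂ _) :
          (Fin n → ℂ) →ₗ[ℂ] (Fin n → ℂ)) W)
      have h2 : finrank ℂ ((V k) ⊔ (Submodule.comap ((g ^ (k+1) : Module.End ℂ _) :
          (Fin n → ℂ) →ₗ[ℂ] (Fin n → ℂ)) W) : Submodule ℂ (Fin n → ℂ)) ≤ n := by
        have := Submodule.finrank_le ((V k) ⊔ (Submodule.comap ((g ^ (k+1) :
          Module.End ℂ _) : (Fin n → ℂ) →ₗ[ℂ] (Fin n → ℂ)) W))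
        simpa using this
      have h3 := hfrturn (k+1)
      rw [hVsucc k]
      omega
  -- stabilization implies common eigenvalue: strict decrease
  have hstab : ∀ k : ℕ, V k ≠ ⊥ → V (k+1) < V k := by
    intro k hne
    rcases lt_or_eq_of_le (hVmono k) with h | h
    · exact h
    · exfalso
      -- V k is g-invariant
      have hinv : ∀ x ∈ V k, g x ∈ V k := by
        intro x hx
        rw [← h] at hx
        rw [memV] at hx ⊢
        intro j hj
        have := hx (j+1) (by omega)
        rwa [pow_succ, Module.End.mul_apply] at this
      haveI : Nontrivial (V k) := Submodule.nontrivial_iff_ne_bot.mpr hne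
      obtain ⟨μ, hμ⟩ := Module.End.exists_eigenvalue (g.restrict hinv)
      obtain ⟨w', hw'⟩ := hμ.exists_hasEigenvector
      have hww : g (w' : Fin n → ℂ) = μ • (w' : Fin n → ℂ) := by
        have := hw'.apply_eq_smul
        calc g (w' : Fin n → ℂ) = ((g.restrict hinv) w' : Fin n → ℂ) := rfl
          _ = μ • (w' : Fin n → ℂ) := by rw [this]; rfl
      have hwW : (w' : Fin n → ℂ) ∈ W := by
        have hw : (w' : Fin n → ℂ) ∈ V k := w'.2
        rw [memV] at hw
        simpa using hw 0 (by omega)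
      apply hspec
      refine ⟨μ, fun i => ?_⟩
      have heig : Module.End.HasEigenvalue ((A i).mulVecLin) μ := by
        apply Module.End.hasEigenvalue_of_hasEigenvector (x := (w' : Fin n → ℂ))
        constructor
        · rw [Module.End.mem_eigenspace_iff, Matrix.mulVecLin_apply, hagree i _ hwW,
            ← Matrix.mulVecLin_apply, ← hgdef, hww]
        · exact fun hc => hw'.2 (Subtype.coe_injective (by simpa using hc))
      have : μ ∈ spectrum ℂ ((A i).mulVecLin) :=
        Module.End.hasEigenvalue_iff_mem_spectrum.mp heig
      have h3 : (Matrix.toLinAlgEquiv' (A i)) = (A i).mulVecLin := rfl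
      have hsp : spectrum ℂ ((A i).mulVecLin) = spectrum ℂ (A i) := by
        rw [← h3, AlgEquiv.spectrum_eq]
      rwa [← hsp]
  -- upper bound
  have hVub : ∀ k, finrank ℂ (V k) + k ≤ n - 1 ∨ V k = ⊥ := by
    intro k
    induction k with
    | zero => left; omega
    | succ k ih =>
      by_cases hbot : V k = ⊥
      · right
        have := hVmono k
        rw [hbot] at this
        exact le_bot_iff.mp this
      · rcases ih with ih | ih
        · left
          have := Submodule.finrank_lt_finrank_of_lt (hstab k hbot)
          omega
        · exact absurd ih hbot
  have hVtop : V (n-1) = ⊥ := by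
    rcases hVub (n-1) with h | h
    · have : finrank ℂ (V (n-1)) = 0 := by omega
      exact Submodule.finrank_eq_zero.mp this
    · exact h
  have hVne : V (n-2) ≠ ⊥ := by
    intro hc
    have := hVlb (n-2)
    rw [hc] at this
    simp [finrank_bot] at this
    omega
  obtain ⟨v, hvV, hvne⟩ := (Submodule.ne_bot_iff _).mp hVne
  have hvW : ∀ k : ℕ, k ≤ n - 2 → (g ^ k) v ∈ W := by
    intro k hk
    exact (memV _ _).mp hvV k hk
  have hvnW : (g ^ (n-1)) v ∉ W := by
    intro hc
    apply hvne
    have : v ∈ V (n-1) := by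
      rw [memV]
      intro j hj
      rcases Nat.lt_or_ge j (n-1) with hj' | hj'
      · exact hvW j (by omega)
      · have : j = n - 1 := by omega
        subst this; exact hc
    rw [hVtop] at this
    simpa using this
  -- linear independence
  have hli : LinearIndependent ℂ (fun k : Fin n => (g ^ (k : ℕ)) v) := by
    rw [Fintype.linearIndependent_iff]
    intro c hc
    by_contra hcon
    push_neg at hcon
    obtain ⟨k0, hk0⟩ := hcon
    set S : Finset (Fin n) := Finset.univ.filter (fun k => c k ≠ 0) with hSdef
    have hSne : S.Nonempty := ⟨k0, by simp [hSdef, hk0]⟩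
    set m : Fin n := S.max' hSne with hmdef
    have hmS : c m ≠ 0 := by
      have := S.max'_mem hSne
      simpa [hSdef] using this
    have hmax : ∀ k : Fin n, c k ≠ 0 → (k : ℕ) ≤ (m : ℕ) := by
      intro k hk
      exact S.le_max' k (by simp [hSdef, hk])
    -- apply g^(n-1-m)
    have hc2 : ∑ k : Fin n, c k • (g ^ (n - 1 - (m : ℕ) + (k : ℕ))) v = 0 := by
      have := congrArg (g ^ (n - 1 - (m : ℕ))) hc
      rw [map_sum, map_zero] at this
      rw [← this]
      apply Finset.sum_congr rfl
      intro k _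
      rw [_root_.map_smul, ← Module.End.mul_apply, ← pow_add]
    have hsplit : c m • (g ^ (n-1)) v = - ∑ k ∈ Finset.univ.erase m,
        c k • (g ^ (n - 1 - (m : ℕ) + (k : ℕ))) v := by
      have := Finset.sum_erase_add Finset.univ
        (fun k : Fin n => c k • (g ^ (n - 1 - (m : ℕ) + (k : ℕ))) v) (Finset.mem_univ m)
      rw [hc2] at this
      have hm1 : n - 1 - (m : ℕ) + (m : ℕ) = n - 1 := by
        have := m.2; omega
      simp only [hm1] at this
      exact eq_neg_of_add_eq_zero_right this
    have hmem : (∑ k ∈ Finset.univ.erase m,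
        c k • (g ^ (n - 1 - (m : ℕ) + (k : ℕ))) v) ∈ W := by
      apply Submodule.sum_mem
      intro k hk
      by_cases hck : c k = 0
      · simp [hck]
      · apply Submodule.smul_mem
        apply hvW
        have h1 : (k : ℕ) ≤ (m : ℕ) := hmax k hck
        have h2 : k ≠ m := Finset.ne_of_mem_erase hk
        have h3 : (k : ℕ) ≠ (m : ℕ) := fun hc' => h2 (Fin.ext hc')
        have := m.2
        omega
    apply hvnW
    have hmem2 : c m • (g ^ (n-1)) v ∈ W := by
      rw [hsplit]; exact Submodule.neg_mem _ hmem
    have := Submodule.smul_mem W (c m)⁻¹ hmem2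
    rwa [smul_smul, inv_mul_cancel₀ hmS, one_smul] at this
  -- the new basis
  haveI : Nonempty (Fin n) := ⟨⟨0, by omega⟩⟩
  have hcard : Fintype.card (Fin n) = finrank ℂ (Fin n → ℂ) := by simp
  set b : Basis (Fin n) ℂ (Fin n → ℂ) :=
    basisOfLinearIndependentOfCardEqFinrank hli hcard with hbdef
  have hb : ∀ k : Fin n, b k = (g ^ (k : ℕ)) v := by
    intro k
    rw [hbdef, coe_basisOfLinearIndependentOfCardEqFinrank]
  refine ⟨v, b, ?_, ?_, ?_⟩
  · intro k
    rw [hb k, hpow]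
  · -- span condition
    have hset : {x | ∃ k : Fin n, (k : ℕ) < n - 1 ∧ x = (A0 ^ (k : ℕ)) *ᵥ v} =
        Set.range (fun k : Fin (n-1) => (g ^ (k : ℕ)) v) := by
      ext x
      constructor
      · rintro ⟨k, hk, rfl⟩
        exact ⟨⟨(k : ℕ), hk⟩, by simp [hpow]⟩
      · rintro ⟨k, rfl⟩
        exact ⟨⟨(k : ℕ), by omega⟩, by simpa using k.2, by simp [hpow]⟩
    rw [hset]
    have hli' : LinearIndependent ℂ (fun k : Fin (n-1) => (g ^ (k : ℕ)) v) := by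
      have := hli.comp (fun k : Fin (n-1) => (⟨(k : ℕ), by omega⟩ : Fin n))
        (fun a b hab => by simpa [Fin.ext_iff] using hab)
      exact this
    apply Submodule.eq_of_le_of_finrank_le
    · rw [Submodule.span_le]
      rintro x ⟨k, rfl⟩
      exact hvW _ (by have := k.2; omega)
    · rw [hfrW, finrank_span_eq_card hli']
      simp
  · -- companion matrices
    intro i
    have hcyc : ∀ k : ℕ, k ≤ n - 1 → (g ^ k) v = ((A i) ^ k) *ᵥ v := by
      intro k
      induction k with
      | zero => intro _; simp [Matrix.one_mulVec]
      | succ k ih =>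
        intro hk
        rw [pow_succ' g, Module.End.mul_apply]
        have h1 : g ((g ^ k) v) = A0 *ᵥ ((g ^ k) v) := rfl
        rw [h1, ← hagree i _ (hvW k (by omega)), ih (by omega), Matrix.mulVec_mulVec,
          ← pow_succ']
    -- Cayley-Hamilton
    have hmonic := (A i).charpoly_monic
    have hdeg : (A i).charpoly.natDegree = n := by
      rw [Matrix.charpoly_natDegree_eq_dim]; simp
    have hCH : ((A i) ^ n) = ∑ k : Fin n, (-(A i).charpoly.coeff (k : ℕ)) • (A i) ^ (k : ℕ) := by
      have h0 := (A i).aeval_self_charpoly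
      rw [Polynomial.aeval_eq_sum_range, hdeg, Finset.sum_range_succ] at h0
      have hlc : (A i).charpoly.coeff n = 1 := by
        have := hmonic.coeff_natDegree
        rwa [hdeg] at this
      rw [hlc, one_smul] at h0
      have h1 : ((A i) ^ n) = - ∑ j ∈ Finset.range n, (A i).charpoly.coeff j • (A i) ^ j :=
        eq_neg_of_add_eq_zero_right h0
      rw [h1, Finset.sum_range fun j => (A i).charpoly.coeff j • (A i) ^ j]
      rw [← Finset.sum_neg_distrib]
      apply Finset.sum_congr rfl
      intro k _
      rw [neg_smul]
    have hlast : (A i) *ᵥ ((g ^ (n-1)) v) =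
        ∑ k : Fin n, (-(A i).charpoly.coeff (k : ℕ)) • ((g ^ (k : ℕ)) v) := by
      rw [hcyc (n-1) le_rfl, Matrix.mulVec_mulVec, ← pow_succ']
      have hnn : n - 1 + 1 = n := by omega
      rw [hnn, hCH]
      rw [sum_mulVec_aux]
      apply Finset.sum_congr rfl
      intro k _
      rw [Matrix.smul_mulVec, hcyc (k : ℕ) (by have := k.2; omega)]
    -- compute the matrix
    ext r j
    rw [LinearMap.toMatrix_apply, Matrix.mulVecLin_apply]
    by_cases hj : (j : ℕ) = n - 1
    · have hjj : j = ⟨n-1, by omega⟩ := Fin.ext hj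
      rw [hjj, hb, hlast]
      have : (b.repr (∑ k : Fin n, (-(A i).charpoly.coeff (k : ℕ)) • b k)) r =
          -(A i).charpoly.coeff (r : ℕ) := by
        rw [Basis.repr_sum_self]
      rw [show (∑ k : Fin n, (-(A i).charpoly.coeff (k : ℕ)) • ((g ^ (k : ℕ)) v)) =
          ∑ k : Fin n, (-(A i).charpoly.coeff (k : ℕ)) • b k by
        apply Finset.sum_congr rfl; intro k _; rw [hb]]
      rw [this]
      simp [companionMatrix]
    · have hjlt : (j : ℕ) + 1 < n := by have := j.2; omega
      have hstep : (A i) *ᵥ b j = b ⟨(j : ℕ) + 1, hjlt⟩ := by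
        rw [hb, hb, hagree i _ (hvW (j : ℕ) (by omega))]
        show A0 *ᵥ ((g ^ (j : ℕ)) v) = (g ^ ((j : ℕ) + 1)) v
        rw [pow_succ' g, Module.End.mul_apply]
        rfl
      rw [hstep, b.repr_self]
      rw [Finsupp.single_apply]
      simp only [companionMatrix, if_neg hj]
      by_cases hr : (r : ℕ) = (j : ℕ) + 1
      · rw [if_pos (Fin.ext hr.symm), if_pos hr]
      · rw [if_neg (fun hc => hr (congrArg Fin.val hc).symm), if_neg hr]
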